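/- Sequentially queried stochastic gradients satisfy: if sup_x |f'(x) − g'(x)| ≤ ε and observations are s_i = h'(x_i) + ε_i with ε_i iid N(0,σ²) and x_i measurable with respect to previous observations, then the chi-square divergence of the joint distributions over T queries satisfies χ²(P_f^T ‖ P_g^T) ≤ exp(Tε²/σ²) − 1. -/

import Mathlib

noncomputable section
open MeasureTheory ProbabilityTheory Set
open scoped NNReal

/-- The subdifferential of `f : ℝ → ℝ` at `x`. -/
def subderiv (f : ℝ → ℝ) (x : ℝ) : Set ℝ :=
  {s | ∀ z, f x + s * (z - x) ≤ f z}

/-- The minimal-norm subgradient of `f` at `x` (projection of `0` onto `∂f(x)`). -/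
noncomputable def minSub (f : ℝ → ℝ) (x : ℝ) : ℝ :=
  max (sInf (subderiv f x)) (min (sSup (subderiv f x)) 0)

/-- The sequentially observed noisy subgradients: the `n`-th query point is a function
`q n` of the previous observations, and the `n`-th observation is
`s_n = fd(x_n) + ξ_n`. -/
noncomputable def obs (T : ℕ) (fd : ℝ → ℝ) (q : ℕ → (ℕ → ℝ) → ℝ) (ξ : Fin T → ℝ) : ℕ → ℝ
  | n => fd (q n (fun j => if h : j < n then obs T fd q ξ j else 0)) +
      (if h : n < T then ξ ⟨n, h⟩ else 0)
termination_by n => n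
decreasing_by exact h

/-- The joint law of `T` sequentially queried noisy subgradients of `fd`, with i.i.d.
`N(0,v)` noise. -/
noncomputable def seqLaw (T : ℕ) (v : ℝ≥0) (fd : ℝ → ℝ) (q : ℕ → (ℕ → ℝ) → ℝ) :
    Measure (Fin T → ℝ) :=
  Measure.map (fun ξ (i : Fin T) => obs T fd q ξ i)
    (Measure.pi fun _ : Fin T => gaussianReal 0 v)

/-- `χ²(P₁‖P₀) = ∫ (dP₁/dP₀) dP₁ − 1`. -/
noncomputable def chiSq {Ω : Type*} [MeasurableSpace Ω] (P₁ P₀ : Measure Ω) : ℝ :=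
  (∫ ω, (P₁.rnDeriv P₀ ω).toReal ∂P₁) - 1

section Infra
open Real
open scoped ENNReal

variable {v : ℝ≥0} {α β : Type*} [MeasurableSpace α] [MeasurableSpace β]

lemma gauss_density (hv : v ≠ 0) (m : ℝ) :
    gaussianReal m v = (gaussianReal 0 v).withDensity
      (fun x => ENNReal.ofReal (Real.exp ((2*x*m - m^2) / (2*(v:ℝ))))) := by
  have hvr : (0:ℝ) < (v:ℝ) := by positivity
  rw [gaussianReal_of_var_ne_zero _ hv, gaussianReal_of_var_ne_zero _ hv,
    ← withDensity_mul _ (measurable_gaussianPDF 0 v)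
      (by fun_prop : Measurable (fun x => ENNReal.ofReal (Real.exp ((2*x*m - m^2) / (2*(v:ℝ))))))]
  congr 1
  ext x
  simp only [Pi.mul_apply, gaussianPDF, gaussianPDFReal]
  rw [← ENNReal.ofReal_mul (by positivity)]
  congr 1
  have h : -(x-m)^2/(2*(v:ℝ)) = -(x-0)^2/(2*(v:ℝ)) + (2*x*m - m^2)/(2*(v:ℝ)) := by
    field_simp; ring
  rw [h, Real.exp_add]; ring

/-- one-step density of the shifted gaussian -/
def rho1 (v : ℝ≥0) (a x : ℝ) : ℝ≥0∞ := ENNReal.ofReal (Real.exp (-(2*x*a + a^2) / (2*(v:ℝ))))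

lemma measurable_rho1 (a : ℝ) : Measurable (rho1 v a) := by unfold rho1; fun_prop

lemma gauss_shift (hv : v ≠ 0) (a : ℝ) :
    (gaussianReal 0 v).map (· - a) = (gaussianReal 0 v).withDensity (rho1 v a) := by
  have : ((· - a) : ℝ → ℝ) = (· + (-a)) := by ext x; ring
  rw [this, gaussianReal_map_add_const, zero_add, gauss_density hv]
  congr 1
  ext x
  unfold rho1
  congr 2
  ring

lemma gauss_lint_rho1 (hv : v ≠ 0) (a : ℝ) :
    ∫⁻ x, rho1 v a x ∂(gaussianReal 0 v) = 1 := by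
  have hp : IsProbabilityMeasure ((gaussianReal 0 v).map (· - a)) :=
    Measure.isProbabilityMeasure_map (by fun_prop)
  have h := congrArg (fun μ : Measure ℝ => μ Set.univ) (gauss_shift hv a)
  simp only [withDensity_apply _ MeasurableSet.univ, setLIntegral_univ] at h
  rw [← h, measure_univ]

lemma gauss_lint (hv : v ≠ 0) (a : ℝ) :
    ∫⁻ x, ENNReal.ofReal (Real.exp ((-(2*x*a) + a^2) / (2*(v:ℝ)))) ∂(gaussianReal 0 v)
      = ENNReal.ofReal (Real.exp (a^2/(v:ℝ))) := by
  have hvr : (0:ℝ) < (v:ℝ) := by positivity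
  have h : ∀ x : ℝ, ENNReal.ofReal (Real.exp ((-(2*x*a) + a^2) / (2*(v:ℝ))))
      = ENNReal.ofReal (Real.exp (a^2/(v:ℝ))) * rho1 v a x := by
    intro x
    rw [rho1, ← ENNReal.ofReal_mul (Real.exp_nonneg _), ← Real.exp_add]
    congr 2
    field_simp
    ring
  simp_rw [h]
  rw [lintegral_const_mul _ (measurable_rho1 a), gauss_lint_rho1 hv a, mul_one]

/-- push a density through a measurable equivalence -/
lemma map_withDensity_equiv (φ : α ≃ᵐ β) (μ : Measure α) {g : α → ℝ≥0∞} (hg : Measurable g) :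
    Measure.map φ (μ.withDensity g) = (Measure.map φ μ).withDensity (g ∘ φ.symm) := by
  ext s hs
  rw [Measure.map_apply φ.measurable hs, withDensity_apply _ (φ.measurable hs),
    withDensity_apply _ hs, setLIntegral_map hs (hg.comp φ.symm.measurable) φ.measurable]
  refine setLIntegral_congr_fun (φ.measurable hs) (fun x _ => ?_)
  simp

lemma prod_withDensity_right (μ : Measure α) [SigmaFinite μ] (ν : Measure β) [SigmaFinite ν]
    {f : β → ℝ≥0∞} (hf : Measurable f) [SigmaFinite (ν.withDensity f)] :
    μ.prod (ν.withDensity f) = (μ.prod ν).withDensity (fun p => f p.2) := by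
  refine Measure.prod_eq fun s t hs ht => ?_
  rw [withDensity_apply _ (hs.prod ht), ← Measure.prod_restrict,
    lintegral_prod (fun p => f p.2) ((hf.comp measurable_snd).aemeasurable)]
  simp only []
  rw [lintegral_const, Measure.restrict_apply_univ, withDensity_apply _ ht, mul_comm]

/-- the skew shift equivalence -/
def skewEquiv {m' : β → ℝ} (hm' : Measurable m') : (ℝ × β) ≃ᵐ (ℝ × β) where
  toEquiv :=
  { toFun := fun p => (p.1 - m' p.2, p.2)
    invFun := fun p => (p.1 + m' p.2, p.2)
    left_inv := fun p => by simp
    right_inv := fun p => by simp }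
  measurable_toFun := (measurable_fst.sub (hm'.comp measurable_snd)).prodMk measurable_snd
  measurable_invFun := (measurable_fst.add (hm'.comp measurable_snd)).prodMk measurable_snd

lemma measurable_rho1_pair {m' : β → ℝ} (hm' : Measurable m') :
    Measurable (fun p : ℝ × β => rho1 v (m' p.2) p.1) := by
  unfold rho1
  fun_prop

lemma map_skewEquiv (hv : v ≠ 0) (γ : Measure β) [SigmaFinite γ] {m' : β → ℝ}
    (hm' : Measurable m') :
    Measure.map (skewEquiv hm') ((gaussianReal 0 v).prod γ)
      = ((gaussianReal 0 v).prod γ).withDensity (fun p => rho1 v (m' p.2) p.1) := by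
  set μ := gaussianReal 0 v with hμ
  have hmeas : Measurable (skewEquiv (β := β) hm') := (skewEquiv hm').measurable
  ext s hs
  rw [Measure.map_apply hmeas hs, Measure.prod_apply_symm (hmeas hs),
    withDensity_apply _ hs, ← lintegral_indicator hs,
    lintegral_prod_symm _ (((measurable_rho1_pair hm').indicator hs).aemeasurable)]
  refine lintegral_congr fun y => ?_
  have hslice : (fun x : ℝ => (x, y)) ⁻¹' (skewEquiv hm' ⁻¹' s)
      = (fun x : ℝ => x - m' y) ⁻¹' ((fun x : ℝ => (x, y)) ⁻¹' s) := rfl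
  have hsl_meas : MeasurableSet ((fun x : ℝ => (x, y)) ⁻¹' s) :=
    measurable_prodMk_right hs
  rw [hslice, ← Measure.map_apply (measurable_sub_const (m' y)) hsl_meas]
  have := gauss_shift hv (m' y)
  rw [hμ, this, withDensity_apply _ hsl_meas, ← lintegral_indicator hsl_meas]
  refine lintegral_congr fun t => ?_
  by_cases h : (t, y) ∈ s <;> simp [Set.indicator, h]

lemma lemA (hv : v ≠ 0) :
    ∀ (n : ℕ) (S : (Fin n → ℝ) → (Fin n → ℝ)) (c d : Fin n → (Fin n → ℝ) → ℝ),
    (∀ i, Measurable (c i)) → (∀ i, Measurable (d i)) →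
    (∀ ξ i, S ξ i = ξ i - c i ξ) →
    (∀ i ξ, d i (S ξ) = c i ξ) →
    (∀ (i : Fin n) (ξ ξ' : Fin n → ℝ), (∀ j : Fin n, (j:ℕ) < (i:ℕ) → ξ j = ξ' j) → c i ξ = c i ξ') →
    (∀ (i : Fin n) (η η' : Fin n → ℝ), (∀ j : Fin n, (j:ℕ) < (i:ℕ) → η j = η' j) → d i η = d i η') →
    Measure.map S (Measure.pi fun _ : Fin n => gaussianReal 0 v)
      = (Measure.pi fun _ : Fin n => gaussianReal 0 v).withDensity
          (fun η => ∏ i, ENNReal.ofReal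
            (Real.exp (-(2 * η i * d i η + (d i η)^2) / (2*(v:ℝ))))) := by
  intro n
  induction n with
  | zero =>
    intro S c d _ _ hS _ _ _
    have hSid : S = id := by
      funext ξ
      exact funext fun i => i.elim0
    rw [hSid, Measure.map_id]
    have : (fun η : Fin 0 → ℝ => ∏ i : Fin 0, ENNReal.ofReal
        (Real.exp (-(2 * η i * d i η + (d i η)^2) / (2*(v:ℝ))))) = (1 : (Fin 0 → ℝ) → ℝ≥0∞) := by
      funext η; simp
    rw [this, withDensity_one]
  | succ n ih =>
    intro S c d hcm hdm hS hdc hca hda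
    set ν := gaussianReal 0 v with hν
    set γ' : Measure (Fin n → ℝ) := Measure.pi fun _ : Fin n => ν with hγ'
    set e := MeasurableEquiv.piFinSuccAbove (fun _ : Fin (n+1) => ℝ) (Fin.last n) with he
    have hmp := measurePreserving_piFinSuccAbove (fun _ : Fin (n+1) => ν) (Fin.last n)
    set ins : ℝ → (Fin n → ℝ) → (Fin (n+1) → ℝ) := fun t ξ' => e.symm (t, ξ') with hinsdef
    set tl : (Fin (n+1) → ℝ) → (Fin n → ℝ) := fun η j => η j.castSucc with htl
    set c' : Fin n → (Fin n → ℝ) → ℝ := fun j ξ' => c j.castSucc (ins 0 ξ') with hc'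
    set d' : Fin n → (Fin n → ℝ) → ℝ := fun j η' => d j.castSucc (ins 0 η') with hd'
    set m : (Fin n → ℝ) → ℝ := fun ξ' => c (Fin.last n) (ins 0 ξ') with hm
    set m' : (Fin n → ℝ) → ℝ := fun η' => d (Fin.last n) (ins 0 η') with hm'
    set S' : (Fin n → ℝ) → (Fin n → ℝ) := fun ξ' j => ξ' j - c' j ξ' with hS'def
    have hins : Measurable fun ξ' : Fin n → ℝ => ins 0 ξ' :=
      e.symm.measurable.comp (measurable_const.prodMk measurable_id)
    have hc'm : ∀ j, Measurable (c' j) := fun j => (hcm j.castSucc).comp hins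
    have hd'm : ∀ j, Measurable (d' j) := fun j => (hdm j.castSucc).comp hins
    have hmm : Measurable m := (hcm (Fin.last n)).comp hins
    have hm'm : Measurable m' := (hdm (Fin.last n)).comp hins
    have hS'm : Measurable S' :=
      measurable_pi_lambda _ fun j => (measurable_pi_apply j).sub (hc'm j)
    have hSm : Measurable S := by
      have : S = fun ξ i => ξ i - c i ξ := funext fun ξ => funext fun i => hS ξ i
      rw [this]
      exact measurable_pi_lambda _ fun i => (measurable_pi_apply i).sub (hcm i)
    -- pointwise facts about ins
    have hsnoc : ∀ (t : ℝ) (ξ' : Fin n → ℝ),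
        ins t ξ' = (Fin.snoc (α := fun _ : Fin (n+1) => ℝ) ξ' t) := by
      intro t ξ'
      show (Fin.last n).insertNth t ξ' = (Fin.snoc (α := fun _ : Fin (n+1) => ℝ) ξ' t)
      exact Fin.insertNth_last' t ξ'
    have hcoord : ∀ (t : ℝ) (ξ' : Fin n → ℝ) (j : Fin n), ins t ξ' j.castSucc = ξ' j := by
      intro t ξ' j; rw [hsnoc]; simp
    have hclast : ∀ (t : ℝ) (ξ' : Fin n → ℝ), ins t ξ' (Fin.last n) = t := by
      intro t ξ'; rw [hsnoc]; simp
    have hagree : ∀ (t t' : ℝ) (ξ' : Fin n → ℝ) (i : Fin (n+1)), (i:ℕ) ≤ n →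
        ∀ j : Fin (n+1), (j:ℕ) < (i:ℕ) → ins t ξ' j = ins t' ξ' j := by
      intro t t' ξ' i hi j hj
      have hjn : (j:ℕ) < n := lt_of_lt_of_le hj hi
      have hj' : j ≠ Fin.last n := by intro h; rw [h] at hjn; simp at hjn
      obtain ⟨k, hk⟩ : ∃ k : Fin n, j = k.castSucc :=
        ⟨j.castPred hj', (Fin.castSucc_castPred j hj').symm⟩
      rw [hk, hcoord, hcoord]
    have hcval : ∀ (t : ℝ) (ξ' : Fin n → ℝ) (j : Fin n),
        c j.castSucc (ins t ξ') = c' j ξ' := fun t ξ' j =>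
      hca j.castSucc _ _ (hagree t 0 ξ' j.castSucc (Nat.le_of_lt_succ j.castSucc.isLt))
    have hdval : ∀ (t : ℝ) (ξ' : Fin n → ℝ) (j : Fin n),
        d j.castSucc (ins t ξ') = d' j ξ' := fun t ξ' j =>
      hda j.castSucc _ _ (hagree t 0 ξ' j.castSucc (Nat.le_of_lt_succ j.castSucc.isLt))
    have hmval : ∀ (t : ℝ) (ξ' : Fin n → ℝ), c (Fin.last n) (ins t ξ') = m ξ' := fun t ξ' =>
      hca (Fin.last n) _ _ (hagree t 0 ξ' (Fin.last n) le_rfl)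
    have hm'val : ∀ (t : ℝ) (η' : Fin n → ℝ), d (Fin.last n) (ins t η') = m' η' := fun t η' =>
      hda (Fin.last n) _ _ (hagree t 0 η' (Fin.last n) le_rfl)
    -- structure of S through the equivalence
    have hSins : ∀ (t : ℝ) (ξ' : Fin n → ℝ), S (ins t ξ') = ins (t - m ξ') (S' ξ') := by
      intro t ξ'
      funext k
      refine Fin.lastCases ?_ (fun j => ?_) k
      · rw [hS, hclast, hclast, hmval]
      · rw [hS, hcoord, hcoord, hcval]
    have hdc' : ∀ (j : Fin n) (ξ' : Fin n → ℝ), d' j (S' ξ') = c' j ξ' := by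
      intro j ξ'
      have h1 := hdc j.castSucc (ins 0 ξ')
      rw [hSins 0 ξ'] at h1
      rw [hdval _ _ j] at h1
      exact h1
    have hm'S : ∀ ξ' : Fin n → ℝ, m' (S' ξ') = m ξ' := by
      intro ξ'
      have h1 := hdc (Fin.last n) (ins 0 ξ')
      rw [hSins 0 ξ', hm'val] at h1
      exact h1
    -- apply induction hypothesis
    set ρ' : (Fin n → ℝ) → ℝ≥0∞ := fun η' => ∏ j, ENNReal.ofReal
        (Real.exp (-(2 * η' j * d' j η' + (d' j η')^2) / (2*(v:ℝ)))) with hρ'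
    have hρ'm : Measurable ρ' := by
      apply Finset.measurable_prod
      intro j _
      exact Measurable.ennreal_ofReal (by have h1 := hd'm j; fun_prop)
    have hihS : Measure.map S' γ' = γ'.withDensity ρ' := by
      refine ih S' c' d' hc'm hd'm (fun ξ' j => rfl) hdc' ?_ ?_
      · intro j ξ' ξ'' hagr
        apply hca
        intro k hk
        have hkn : (k:ℕ) < n := lt_of_lt_of_le hk (Nat.le_of_lt_succ j.castSucc.isLt)
        have hk' : k ≠ Fin.last n := by intro h; rw [h] at hkn; simp at hkn
        obtain ⟨k', hk'eq⟩ : ∃ k' : Fin n, k = k'.castSucc :=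
          ⟨k.castPred hk', (Fin.castSucc_castPred k hk').symm⟩
        rw [hk'eq, hcoord, hcoord]
        apply hagr
        rw [hk'eq] at hk
        simpa using hk
      · intro j η' η'' hagr
        apply hda
        intro k hk
        have hkn : (k:ℕ) < n := lt_of_lt_of_le hk (Nat.le_of_lt_succ j.castSucc.isLt)
        have hk' : k ≠ Fin.last n := by intro h; rw [h] at hkn; simp at hkn
        obtain ⟨k', hk'eq⟩ : ∃ k' : Fin n, k = k'.castSucc :=
          ⟨k.castPred hk', (Fin.castSucc_castPred k hk').symm⟩
        rw [hk'eq, hcoord, hcoord]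
        apply hagr
        rw [hk'eq] at hk
        simpa using hk
    -- the skew map on the product space
    set G : ℝ × (Fin n → ℝ) → ℝ × (Fin n → ℝ) := fun p => (p.1, S' p.2) with hG
    have hGm : Measurable G := measurable_fst.prodMk (hS'm.comp measurable_snd)
    have hSe : ∀ ξ : Fin (n+1) → ℝ, S ξ = e.symm (skewEquiv hm'm (G (e ξ))) := by
      intro ξ
      have h0 : ξ = ins (e ξ).1 (e ξ).2 := by
        rw [hinsdef]
        simp only []
        rw [Prod.mk.eta, e.symm_apply_apply]
      conv_lhs => rw [h0]
      rw [hSins]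
      have : skewEquiv hm'm (G (e ξ)) = ((e ξ).1 - m (e ξ).2, S' (e ξ).2) := by
        show ((e ξ).1 - m' (S' (e ξ).2), S' (e ξ).2) = _
        rw [hm'S]
      rw [this]
    -- now compute the pushforward
    have step1 : Measure.map S (Measure.pi fun _ : Fin (n+1) => ν)
        = Measure.map e.symm (Measure.map (skewEquiv hm'm)
            (Measure.map G (ν.prod γ'))) := by
      rw [← hmp.map_eq]
      rw [Measure.map_map (skewEquiv hm'm).measurable hGm]
      rw [Measure.map_map e.symm.measurable (((skewEquiv hm'm).measurable).comp hGm)]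
      rw [Measure.map_map (e.symm.measurable.comp
        (((skewEquiv hm'm).measurable).comp hGm)) e.measurable]
      congr 1
      funext ξ
      exact hSe ξ
    have step2 : Measure.map G (ν.prod γ') = ν.prod (γ'.withDensity ρ') := by
      have h1 : Measure.map G (ν.prod γ') = (ν.map id).prod (γ'.map S') := by
        rw [Measure.map_prod_map _ _ measurable_id hS'm]
        rfl
      rw [h1, Measure.map_id, hihS]
    haveI hpm : IsProbabilityMeasure (γ'.withDensity ρ') := by
      rw [← hihS]
      exact Measure.isProbabilityMeasure_map hS'm.aemeasurable
    have step3 : ν.prod (γ'.withDensity ρ') = (ν.prod γ').withDensity (fun p => ρ' p.2) :=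
      prod_withDensity_right ν γ' hρ'm
    have step4 : Measure.map (skewEquiv hm'm) ((ν.prod γ').withDensity (fun p => ρ' p.2))
        = ((ν.prod γ').withDensity (fun p => rho1 v (m' p.2) p.1)).withDensity
            (fun p => ρ' p.2) := by
      rw [map_withDensity_equiv (skewEquiv hm'm) _ (show Measurable (fun p : ℝ × (Fin n → ℝ) => ρ' p.2) from hρ'm.comp measurable_snd)]
      rw [map_skewEquiv hv γ' hm'm]
      rfl
    have step5 : ((ν.prod γ').withDensity (fun p => rho1 v (m' p.2) p.1)).withDensity
            (fun p => ρ' p.2)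
        = (ν.prod γ').withDensity (fun p => rho1 v (m' p.2) p.1 * ρ' p.2) := by
      rw [← withDensity_mul _ (measurable_rho1_pair hm'm)
        (show Measurable (fun p : ℝ × (Fin n → ℝ) => ρ' p.2) from hρ'm.comp measurable_snd)]
      rfl
    have step6 : Measure.map e.symm ((ν.prod γ').withDensity
          (fun p => rho1 v (m' p.2) p.1 * ρ' p.2))
        = (Measure.pi fun _ : Fin (n+1) => ν).withDensity
            (fun η => rho1 v (m' ((e η).2)) ((e η).1) * ρ' ((e η).2)) := by
      rw [map_withDensity_equiv e.symm _
        (show Measurable (fun p : ℝ × (Fin n → ℝ) => rho1 v (m' p.2) p.1 * ρ' p.2) from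
          (measurable_rho1_pair hm'm).mul (hρ'm.comp measurable_snd))]
      rw [(hmp.symm e).map_eq]
      rfl
    rw [step1, step2, step3, step4, step5, step6]
    -- identify the density
    congr 1
    funext η
    have he1 : (e η).1 = η (Fin.last n) := rfl
    have he2 : (e η).2 = tl η := by
      funext j
      show η ((Fin.last n).succAbove j) = η j.castSucc
      rw [Fin.succAbove_last]
    have htlins : ∀ (k : Fin (n+1)), (k:ℕ) < n → ins 0 (tl η) k = η k := by
      intro k hk
      have hk' : k ≠ Fin.last n := by intro h; rw [h] at hk; simp at hk
      obtain ⟨k', hk'eq⟩ : ∃ k' : Fin n, k = k'.castSucc :=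
        ⟨k.castPred hk', (Fin.castSucc_castPred k hk').symm⟩
      rw [hk'eq, hcoord]
    rw [he1, he2]
    rw [Fin.prod_univ_castSucc]
    have hlast : d (Fin.last n) η = m' (tl η) := by
      rw [← hm'val 0 (tl η)]
      apply hda
      intro j hj
      exact (htlins j (lt_of_lt_of_le hj (by simp))).symm
    have hcs : ∀ j : Fin n, d j.castSucc η = d' j (tl η) := by
      intro j
      rw [← hdval 0 (tl η) j]
      apply hda
      intro k hk
      have hkn : (k:ℕ) < n := lt_of_lt_of_le hk (Nat.le_of_lt_succ j.castSucc.isLt)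
      exact (htlins k hkn).symm
    rw [mul_comm]
    congr 1
    · rw [hρ']
      refine Finset.prod_congr rfl fun j _ => ?_
      rw [hcs j]
    · rw [hlast]
      rfl

lemma lemB (hv : v ≠ 0) {ε : ℝ} (hε : 0 ≤ ε) :
    ∀ (n : ℕ) (c : Fin n → (Fin n → ℝ) → ℝ), (∀ i, Measurable (c i)) →
    (∀ (i : Fin n) (ξ ξ' : Fin n → ℝ), (∀ j : Fin n, (j:ℕ) < (i:ℕ) → ξ j = ξ' j) → c i ξ = c i ξ') →
    (∀ i ξ, |c i ξ| ≤ ε) →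
    ∫⁻ ξ, ∏ i, ENNReal.ofReal (Real.exp ((-(2 * ξ i * c i ξ) + (c i ξ)^2) / (2*(v:ℝ))))
        ∂(Measure.pi fun _ : Fin n => gaussianReal 0 v)
      ≤ ENNReal.ofReal (Real.exp (n * ε^2 / (v:ℝ))) := by
  intro n
  induction n with
  | zero =>
    intro c _ _ _
    simp only [Finset.univ_eq_empty, Finset.prod_empty, lintegral_one, measure_univ,
      Nat.cast_zero, zero_mul, zero_div, Real.exp_zero, ENNReal.ofReal_one, le_refl]
  | succ n ih =>
    intro c hcm hca hcb
    set ν := gaussianReal 0 v with hν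
    set e := MeasurableEquiv.piFinSuccAbove (fun _ : Fin (n+1) => ℝ) (Fin.last n) with he
    have hmp := measurePreserving_piFinSuccAbove (fun _ : Fin (n+1) => ν) (Fin.last n)
    set F : (Fin (n+1) → ℝ) → ℝ≥0∞ := fun η =>
      ∏ i, ENNReal.ofReal (Real.exp ((-(2 * η i * c i η) + (c i η)^2) / (2*(v:ℝ)))) with hF
    -- reduced drifts
    set ins : ℝ → (Fin n → ℝ) → (Fin (n+1) → ℝ) := fun t ξ' => e.symm (t, ξ') with hinsdef
    set c' : Fin n → (Fin n → ℝ) → ℝ :=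
      fun j ξ' => c j.castSucc (ins 0 ξ') with hc'
    set m : (Fin n → ℝ) → ℝ := fun ξ' => c (Fin.last n) (ins 0 ξ') with hm
    have hins : Measurable fun ξ' : Fin n → ℝ => ins 0 ξ' :=
      e.symm.measurable.comp (measurable_const.prodMk measurable_id)
    have hc'm : ∀ j, Measurable (c' j) := fun j => (hcm j.castSucc).comp hins
    have hmm : Measurable m := (hcm (Fin.last n)).comp hins
    have hmb : ∀ ξ', |m ξ'| ≤ ε := fun ξ' => hcb _ _
    -- key pointwise facts about insertNth
    have hsnoc : ∀ (t : ℝ) (ξ' : Fin n → ℝ), ins t ξ' = (Fin.snoc (α := fun _ : Fin (n+1) => ℝ) ξ' t) := by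
      intro t ξ'
      show (Fin.last n).insertNth t ξ' = (Fin.snoc (α := fun _ : Fin (n+1) => ℝ) ξ' t)
      exact Fin.insertNth_last' t ξ'
    have hcoord : ∀ (t : ℝ) (ξ' : Fin n → ℝ) (j : Fin n),
        ins t ξ' j.castSucc = ξ' j := by
      intro t ξ' j
      rw [hsnoc]
      simp
    have hclast : ∀ (t : ℝ) (ξ' : Fin n → ℝ),
        ins t ξ' (Fin.last n) = t := by
      intro t ξ'
      rw [hsnoc]
      simp
    have hagree : ∀ (t : ℝ) (ξ' : Fin n → ℝ) (i : Fin (n+1)), (i:ℕ) ≤ n →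
        ∀ j : Fin (n+1), (j:ℕ) < (i:ℕ) →
          ins t ξ' j = ins 0 ξ' j := by
      intro t ξ' i hi j hj
      have hjn : (j:ℕ) < n := lt_of_lt_of_le hj (Nat.lt_succ_iff.mp i.isLt |> fun _ => hi)
      have hj' : j ≠ Fin.last n := by
        intro h; rw [h] at hjn; simp at hjn
      obtain ⟨k, hk⟩ : ∃ k : Fin n, j = k.castSucc := ⟨j.castPred hj', (Fin.castSucc_castPred j hj').symm⟩
      rw [hk, hcoord, hcoord]
    -- c at castSucc doesn't depend on last coordinate
    have hcval : ∀ (t : ℝ) (ξ' : Fin n → ℝ) (j : Fin n),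
        c j.castSucc (ins t ξ') = c' j ξ' := by
      intro t ξ' j
      exact hca j.castSucc _ _ (hagree t ξ' j.castSucc (Nat.le_of_lt_succ j.castSucc.isLt))
    have hmval : ∀ (t : ℝ) (ξ' : Fin n → ℝ),
        c (Fin.last n) (ins t ξ') = m ξ' := by
      intro t ξ'
      exact hca (Fin.last n) _ _ (hagree t ξ' (Fin.last n) le_rfl)
    -- the integrand splits
    have hsplit : ∀ (t : ℝ) (ξ' : Fin n → ℝ),
        F (ins t ξ')
          = (∏ j : Fin n, ENNReal.ofReal
              (Real.exp ((-(2 * ξ' j * c' j ξ') + (c' j ξ')^2) / (2*(v:ℝ)))))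
            * ENNReal.ofReal (Real.exp ((-(2 * t * m ξ') + (m ξ')^2) / (2*(v:ℝ)))) := by
      intro t ξ'
      simp only [hF]
      rw [Fin.prod_univ_castSucc]
      congr 1
      · exact Finset.prod_congr rfl fun j _ => by rw [hcoord, hcval]
      · rw [hclast, hmval]
    -- transfer the integral
    have hFm : Measurable F := by
      apply Finset.measurable_prod
      intro i _
      have h1 : Measurable fun η : Fin (n+1) → ℝ => η i := measurable_pi_apply i
      have h2 := hcm i
      exact Measurable.ennreal_ofReal (by fun_prop)
    have h1 : ∫⁻ η, F η ∂(Measure.pi fun _ : Fin (n+1) => ν)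
        = ∫⁻ p : ℝ × (Fin n → ℝ), F (e.symm p)
            ∂(ν.prod (Measure.pi fun _ : Fin n => ν)) := by
      have h := (hmp.symm e).lintegral_map_equiv F e.symm
      simpa using h
    rw [h1]
    have h2 : ∫⁻ p : ℝ × (Fin n → ℝ), F (e.symm p)
            ∂(ν.prod (Measure.pi fun _ : Fin n => ν))
        = ∫⁻ ξ' : Fin n → ℝ, ∫⁻ t : ℝ, F (ins t ξ')
            ∂ν ∂(Measure.pi fun _ : Fin n => ν) := by
      exact lintegral_prod_symm _ ((hFm.comp e.symm.measurable).aemeasurable)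
    rw [h2]
    have h3 : ∀ ξ' : Fin n → ℝ, ∫⁻ t : ℝ, F (ins t ξ') ∂ν
        ≤ (∏ j : Fin n, ENNReal.ofReal
              (Real.exp ((-(2 * ξ' j * c' j ξ') + (c' j ξ')^2) / (2*(v:ℝ)))))
          * ENNReal.ofReal (Real.exp (ε^2/(v:ℝ))) := by
      intro ξ'
      simp_rw [hsplit]
      rw [lintegral_const_mul _ (by fun_prop)]
      gcongr
      rw [gauss_lint hv (m ξ')]
      apply ENNReal.ofReal_le_ofReal
      apply Real.exp_le_exp.mpr
      apply div_le_div_of_nonneg_right _ (by positivity)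
      · exact sq_le_sq' (neg_le_of_abs_le (hmb ξ') |>.trans_eq rfl |> fun h => by
          have := abs_le.mp (hmb ξ'); nlinarith [abs_le.mp (hmb ξ')]) (by nlinarith [abs_le.mp (hmb ξ')])
    calc ∫⁻ ξ', ∫⁻ t, F (ins t ξ') ∂ν ∂(Measure.pi fun _ : Fin n => ν)
        ≤ ∫⁻ ξ', (∏ j : Fin n, ENNReal.ofReal
              (Real.exp ((-(2 * ξ' j * c' j ξ') + (c' j ξ')^2) / (2*(v:ℝ)))))
            * ENNReal.ofReal (Real.exp (ε^2/(v:ℝ))) ∂(Measure.pi fun _ : Fin n => ν) :=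
          lintegral_mono h3
      _ = (∫⁻ ξ', (∏ j : Fin n, ENNReal.ofReal
              (Real.exp ((-(2 * ξ' j * c' j ξ') + (c' j ξ')^2) / (2*(v:ℝ)))))
            ∂(Measure.pi fun _ : Fin n => ν)) * ENNReal.ofReal (Real.exp (ε^2/(v:ℝ))) := by
          rw [lintegral_mul_const]
          apply Finset.measurable_prod
          intro j _
          exact Measurable.ennreal_ofReal (by have := hc'm j; fun_prop)
      _ ≤ ENNReal.ofReal (Real.exp (n * ε^2 / (v:ℝ))) * ENNReal.ofReal (Real.exp (ε^2/(v:ℝ))) := by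
          gcongr
          apply ih c' hc'm
          · intro j ξ' ξ'' hagr
            apply hca
            intro k hk
            have hkn : (k:ℕ) < n := lt_of_lt_of_le hk (Nat.le_of_lt_succ j.castSucc.isLt)
            have hk' : k ≠ Fin.last n := by intro h; rw [h] at hkn; simp at hkn
            obtain ⟨k', hk'eq⟩ : ∃ k' : Fin n, k = k'.castSucc :=
              ⟨k.castPred hk', (Fin.castSucc_castPred k hk').symm⟩
            rw [hk'eq, hcoord, hcoord]
            apply hagr
            rw [hk'eq] at hk
            simpa using hk
          · intro j ξ'; exact hcb _ _
      _ = ENNReal.ofReal (Real.exp ((n+1 : ℕ) * ε^2 / (v:ℝ))) := by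
          rw [← ENNReal.ofReal_mul (Real.exp_nonneg _), ← Real.exp_add]
          congr 2
          push_cast
          field_simp

variable {T : ℕ} {h : ℝ → ℝ} {q : ℕ → (ℕ → ℝ) → ℝ}

lemma obs_eq (T : ℕ) (h : ℝ → ℝ) (q : ℕ → (ℕ → ℝ) → ℝ) (ξ : Fin T → ℝ) (n : ℕ) :
    obs T h q ξ n = h (q n (fun j => if hj : j < n then obs T h q ξ j else 0)) +
      (if hn : n < T then ξ ⟨n, hn⟩ else 0) := by
  rw [obs]

lemma obs_measurable (hm : Measurable h) (hq : ∀ n, Measurable (q n)) (n : ℕ) :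
    Measurable (fun ξ : Fin T → ℝ => obs T h q ξ n) := by
  induction n using Nat.strong_induction_on with
  | _ n ih =>
    have heq : (fun ξ : Fin T → ℝ => obs T h q ξ n)
        = fun ξ => h (q n (fun j => if hj : j < n then obs T h q ξ j else 0)) +
          (if hn : n < T then ξ ⟨n, hn⟩ else 0) := funext fun ξ => obs_eq T h q ξ n
    rw [heq]
    apply Measurable.add
    · refine hm.comp ((hq n).comp (measurable_pi_lambda _ fun j => ?_))
      by_cases hj : j < n
      · simp only [dif_pos hj]
        exact ih j hj
      · simp only [dif_neg hj]
        exact measurable_const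
    · by_cases hn : n < T
      · simp only [dif_pos hn]
        exact measurable_pi_apply _
      · simp only [dif_neg hn]
        exact measurable_const

lemma obs_dep (n : ℕ) (ξ ξ' : Fin T → ℝ)
    (hag : ∀ j : Fin T, (j:ℕ) ≤ n → ξ j = ξ' j) :
    obs T h q ξ n = obs T h q ξ' n := by
  induction n using Nat.strong_induction_on with
  | _ n ih =>
    rw [obs_eq, obs_eq]
    congr 1
    · congr 1
      congr 1
      funext j
      by_cases hj : j < n
      · simp only [dif_pos hj]
        exact ih j hj (fun k hk => hag k (le_of_lt (lt_of_le_of_lt hk hj)))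
      · simp only [dif_neg hj]
    · by_cases hn : n < T
      · simp only [dif_pos hn]
        exact hag ⟨n, hn⟩ le_rfl
      · simp only [dif_neg hn]

/-- inverse of the observation map -/
def obsInv (T : ℕ) (h : ℝ → ℝ) (q : ℕ → (ℕ → ℝ) → ℝ) (s : Fin T → ℝ) : Fin T → ℝ :=
  fun i => s i - h (q i (fun j => if hj : j < (i:ℕ) then s ⟨j, hj.trans i.isLt⟩ else 0))

lemma obsInv_measurable (hm : Measurable h) (hq : ∀ n, Measurable (q n)) :
    Measurable (obsInv T h q) := by
  refine measurable_pi_lambda _ fun i => Measurable.sub (measurable_pi_apply i) ?_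
  refine hm.comp ((hq i).comp (measurable_pi_lambda _ fun j => ?_))
  by_cases hj : j < (i:ℕ)
  · simp only [dif_pos hj]
    exact measurable_pi_apply _
  · simp only [dif_neg hj]
    exact measurable_const

lemma obsInv_obs (ξ : Fin T → ℝ) (i : Fin T) :
    obsInv T h q (fun k : Fin T => obs T h q ξ k) i = ξ i := by
  unfold obsInv
  beta_reduce
  rw [obs_eq]
  have hpad : (fun j => if hj : j < (i:ℕ) then
        (fun k : Fin T => obs T h q ξ k) ⟨j, hj.trans i.isLt⟩ else 0)
      = (fun j => if hj : j < (i:ℕ) then obs T h q ξ j else 0) := by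
    funext j
    by_cases hj : j < (i:ℕ) <;> simp [hj]
  rw [hpad, dif_pos i.isLt]
  simp

lemma obs_obsInv (s : Fin T → ℝ) : ∀ (n : ℕ) (hn : n < T),
    obs T h q (obsInv T h q s) n = s ⟨n, hn⟩ := by
  intro n
  induction n using Nat.strong_induction_on with
  | _ n ih =>
    intro hn
    rw [obs_eq, dif_pos hn]
    have hpad : (fun j => if hj : j < n then obs T h q (obsInv T h q s) j else 0)
        = (fun j => if hj : j < n then s ⟨j, hj.trans hn⟩ else 0) := by
      funext j
      by_cases hj : j < n
      · simp only [dif_pos hj]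
        exact ih j hj (hj.trans hn)
      · simp only [dif_neg hj]
    rw [hpad]
    have hinv : obsInv T h q s ⟨n, hn⟩
        = s ⟨n, hn⟩ - h (q n (fun j => if hj : j < n then s ⟨j, hj.trans hn⟩ else 0)) := rfl
    rw [hinv]
    ring

/-- the observation map as a measurable equivalence -/
def obsEquiv (T : ℕ) (h : ℝ → ℝ) (q : ℕ → (ℕ → ℝ) → ℝ)
    (hm : Measurable h) (hq : ∀ n, Measurable (q n)) : (Fin T → ℝ) ≃ᵐ (Fin T → ℝ) where
  toEquiv :=
  { toFun := fun ξ (i : Fin T) => obs T h q ξ i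
    invFun := obsInv T h q
    left_inv := fun ξ => funext fun i => obsInv_obs ξ i
    right_inv := fun s => funext fun i => by
      simpa using obs_obsInv s (i:ℕ) i.isLt }
  measurable_toFun := measurable_pi_lambda _ fun i => obs_measurable hm hq (i:ℕ)
  measurable_invFun := obsInv_measurable hm hq

end Infra

open Real
open scoped ENNReal

/-- If `sup_x |f'(x) − g'(x)| ≤ ε` (minimal-norm subgradients), then the chi-square
divergence of the joint laws of `T` sequentially queried noisy subgradients satisfies
`χ²(P_f^T ‖ P_g^T) ≤ exp(Tε²/σ²) − 1`. -/
theorem chiSq_seq_gradients_le (T : ℕ) (v : ℝ≥0) (hv : v ≠ 0) (ε : ℝ) (hε : 0 ≤ ε)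
    (f g : ℝ → ℝ) (hf : ConvexOn ℝ Set.univ f) (hg : ConvexOn ℝ Set.univ g)
    (fd gd : ℝ → ℝ) (hfd : fd = minSub f) (hgd : gd = minSub g)
    (hfm : Measurable fd) (hgm : Measurable gd)
    (hκ : ∀ x, |fd x - gd x| ≤ ε)
    (q : ℕ → (ℕ → ℝ) → ℝ) (hq : ∀ n, Measurable (q n)) :
    chiSq (seqLaw T v fd q) (seqLaw T v gd q) ≤
      Real.exp ((T : ℝ) * ε ^ 2 / (v : ℝ)) - 1 := by
  classical
  set γ : Measure (Fin T → ℝ) := Measure.pi fun _ : Fin T => gaussianReal 0 v with hγ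
  haveI : IsProbabilityMeasure γ := by rw [hγ]; infer_instance
  set Φf := obsEquiv T fd q hfm hq with hΦf
  set Φg := obsEquiv T gd q hgm hq with hΦg
  -- the drift functions
  set x : Fin T → (Fin T → ℝ) → ℝ :=
    fun i ξ => q (i:ℕ) (fun j => if hj : j < (i:ℕ) then obs T fd q ξ j else 0) with hxdef
  set y : Fin T → (Fin T → ℝ) → ℝ :=
    fun i η => q (i:ℕ) (fun j => if hj : j < (i:ℕ) then obs T gd q η j else 0) with hydef
  set c : Fin T → (Fin T → ℝ) → ℝ := fun i ξ => gd (x i ξ) - fd (x i ξ) with hcdef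
  set d : Fin T → (Fin T → ℝ) → ℝ := fun i η => gd (y i η) - fd (y i η) with hddef
  set S : (Fin T → ℝ) → (Fin T → ℝ) := fun ξ => Φg.symm (Φf ξ) with hSdef
  -- measurability
  have hxm : ∀ i, Measurable (x i) := by
    intro i
    refine (hq (i:ℕ)).comp (measurable_pi_lambda _ fun j => ?_)
    by_cases hj : j < (i:ℕ)
    · simp only [dif_pos hj]; exact obs_measurable hfm hq j
    · simp only [dif_neg hj]; exact measurable_const
  have hym : ∀ i, Measurable (y i) := by
    intro i
    refine (hq (i:ℕ)).comp (measurable_pi_lambda _ fun j => ?_)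
    by_cases hj : j < (i:ℕ)
    · simp only [dif_pos hj]; exact obs_measurable hgm hq j
    · simp only [dif_neg hj]; exact measurable_const
  have hcm : ∀ i, Measurable (c i) := fun i => (hgm.comp (hxm i)).sub (hfm.comp (hxm i))
  have hdm : ∀ i, Measurable (d i) := fun i => (hgm.comp (hym i)).sub (hfm.comp (hym i))
  have hSm : Measurable S := Φg.symm.measurable.comp Φf.measurable
  -- structure facts
  have hSi : ∀ (ξ : Fin T → ℝ) (i : Fin T), S ξ i = ξ i - c i ξ := by
    intro ξ i
    show obsInv T gd q (fun k : Fin T => obs T fd q ξ k) i = ξ i - c i ξ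
    unfold obsInv
    beta_reduce
    have hpad : (fun j => if hj : j < (i:ℕ) then
          (fun k : Fin T => obs T fd q ξ k) ⟨j, hj.trans i.isLt⟩ else 0)
        = (fun j => if hj : j < (i:ℕ) then obs T fd q ξ j else 0) := by
      funext j
      by_cases hj : j < (i:ℕ) <;> simp [hj]
    rw [hpad, obs_eq, dif_pos i.isLt]
    simp only [Fin.eta]
    rw [show c i ξ = gd (x i ξ) - fd (x i ξ) from rfl,
      show x i ξ = q (i:ℕ) (fun j => if hj : j < (i:ℕ) then obs T fd q ξ j else 0) from rfl]
    ring
  have hobsS : ∀ (ξ : Fin T → ℝ) (j : ℕ), j < T → obs T gd q (S ξ) j = obs T fd q ξ j := by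
    intro ξ j hjT
    have h2 : (fun k : Fin T => obs T gd q (S ξ) k) = fun k : Fin T => obs T fd q ξ k := by
      show ⇑Φg (S ξ) = ⇑Φf ξ
      rw [hSdef]
      exact Φg.apply_symm_apply (Φf ξ)
    have := congrFun h2 ⟨j, hjT⟩
    simpa using this
  have hdc : ∀ (i : Fin T) (ξ : Fin T → ℝ), d i (S ξ) = c i ξ := by
    intro i ξ
    have hy' : y i (S ξ) = x i ξ := by
      show q (i:ℕ) (fun j => if hj : j < (i:ℕ) then obs T gd q (S ξ) j else 0)
          = q (i:ℕ) (fun j => if hj : j < (i:ℕ) then obs T fd q ξ j else 0)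
      congr 1
      funext j
      by_cases hj : j < (i:ℕ)
      · simp only [dif_pos hj]
        exact hobsS ξ j (hj.trans i.isLt)
      · simp only [dif_neg hj]
    show gd (y i (S ξ)) - fd (y i (S ξ)) = gd (x i ξ) - fd (x i ξ)
    rw [hy']
  have hca : ∀ (i : Fin T) (ξ ξ' : Fin T → ℝ),
      (∀ j : Fin T, (j:ℕ) < (i:ℕ) → ξ j = ξ' j) → c i ξ = c i ξ' := by
    intro i ξ ξ' hag
    have hx' : x i ξ = x i ξ' := by
      show q (i:ℕ) (fun j => if hj : j < (i:ℕ) then obs T fd q ξ j else 0)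
          = q (i:ℕ) (fun j => if hj : j < (i:ℕ) then obs T fd q ξ' j else 0)
      congr 1
      funext j
      by_cases hj : j < (i:ℕ)
      · simp only [dif_pos hj]
        exact obs_dep j ξ ξ' fun k hk => hag k (lt_of_le_of_lt hk hj)
      · simp only [dif_neg hj]
    show gd (x i ξ) - fd (x i ξ) = gd (x i ξ') - fd (x i ξ')
    rw [hx']
  have hda : ∀ (i : Fin T) (η η' : Fin T → ℝ),
      (∀ j : Fin T, (j:ℕ) < (i:ℕ) → η j = η' j) → d i η = d i η' := by
    intro i η η' hag
    have hy' : y i η = y i η' := by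
      show q (i:ℕ) (fun j => if hj : j < (i:ℕ) then obs T gd q η j else 0)
          = q (i:ℕ) (fun j => if hj : j < (i:ℕ) then obs T gd q η' j else 0)
      congr 1
      funext j
      by_cases hj : j < (i:ℕ)
      · simp only [dif_pos hj]
        exact obs_dep j η η' fun k hk => hag k (lt_of_le_of_lt hk hj)
      · simp only [dif_neg hj]
    show gd (y i η) - fd (y i η) = gd (y i η') - fd (y i η')
    rw [hy']
  have hcb : ∀ (i : Fin T) (ξ : Fin T → ℝ), |c i ξ| ≤ ε := by
    intro i ξ
    show |gd (x i ξ) - fd (x i ξ)| ≤ ε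
    rw [abs_sub_comm]
    exact hκ _
  -- density of the pushforward
  set ρ : (Fin T → ℝ) → ℝ≥0∞ := fun η => ∏ i, ENNReal.ofReal
      (Real.exp (-(2 * η i * d i η + (d i η)^2) / (2*(v:ℝ)))) with hρdef
  have hρm : Measurable ρ := by
    apply Finset.measurable_prod
    intro i _
    exact Measurable.ennreal_ofReal (by have := hdm i; fun_prop)
  have hSγ : Measure.map S γ = γ.withDensity ρ :=
    lemA hv T S c d hcm hdm hSi hdc hca hda
  set μ : Measure (Fin T → ℝ) := Measure.map S γ with hμdef
  haveI : IsProbabilityMeasure μ := Measure.isProbabilityMeasure_map hSm.aemeasurable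
  have hac : μ ≪ γ := by
    rw [hSγ]
    exact withDensity_absolutelyContinuous γ ρ
  -- rewrite the two laws
  have hP1 : seqLaw T v fd q = Measure.map (⇑Φg) μ := by
    have h1 : seqLaw T v fd q = Measure.map (⇑Φf) γ := rfl
    rw [h1, hμdef, Measure.map_map Φg.measurable hSm]
    congr 1
    funext ξ
    show ⇑Φf ξ = ⇑Φg (S ξ)
    rw [hSdef]
    exact (Φg.apply_symm_apply (Φf ξ)).symm
  have hP0 : seqLaw T v gd q = Measure.map (⇑Φg) γ := rfl
  rw [hP1, hP0]
  -- the chi-square computation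
  have hrn := Φg.measurableEmbedding.rnDeriv_map μ γ
  have hrn2 : μ.rnDeriv γ =ᵐ[γ] ρ := by
    have h := Measure.rnDeriv_withDensity γ hρm
    rw [← hSγ] at h
    exact h
  have heq : (fun ξ => ((Measure.map (⇑Φg) μ).rnDeriv (Measure.map (⇑Φg) γ) (Φg ξ)).toReal)
      =ᵐ[μ] fun ξ => (ρ ξ).toReal := by
    have h := (hrn.trans hrn2).fun_comp ENNReal.toReal
    exact hac.ae_le h
  have hrnm : Measurable fun ω =>
      ((Measure.map (⇑Φg) μ).rnDeriv (Measure.map (⇑Φg) γ) ω).toReal :=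
    (Measure.measurable_rnDeriv _ _).ennreal_toReal
  have hint1 : ∫ ω, ((Measure.map (⇑Φg) μ).rnDeriv (Measure.map (⇑Φg) γ) ω).toReal
        ∂(Measure.map (⇑Φg) μ)
      = ∫ ξ, (ρ ξ).toReal ∂μ := by
    rw [integral_map Φg.measurable.aemeasurable hrnm.aestronglyMeasurable]
    exact integral_congr_ae heq
  -- bound the lintegral
  have hlint : ∫⁻ ξ, ρ ξ ∂μ ≤ ENNReal.ofReal (Real.exp ((T:ℝ) * ε^2 / (v:ℝ))) := by
    rw [hμdef, lintegral_map hρm hSm]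
    have hpt : ∀ ξ : Fin T → ℝ, ρ (S ξ) = ∏ i, ENNReal.ofReal
        (Real.exp ((-(2 * ξ i * c i ξ) + (c i ξ)^2) / (2*(v:ℝ)))) := by
      intro ξ
      rw [hρdef]
      refine Finset.prod_congr rfl fun i _ => ?_
      rw [hdc i ξ, hSi ξ i]
      have harg : -(2 * (ξ i - c i ξ) * c i ξ + (c i ξ)^2) / (2*(v:ℝ))
          = (-(2 * ξ i * c i ξ) + (c i ξ)^2) / (2*(v:ℝ)) := by ring
      rw [harg]
    calc ∫⁻ ξ, ρ (S ξ) ∂γ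
        = ∫⁻ ξ, ∏ i, ENNReal.ofReal
            (Real.exp ((-(2 * ξ i * c i ξ) + (c i ξ)^2) / (2*(v:ℝ)))) ∂γ :=
          lintegral_congr hpt
      _ ≤ ENNReal.ofReal (Real.exp ((T:ℝ) * ε^2 / (v:ℝ))) := lemB hv hε T c hcm hca hcb
  have hint2 : ∫ ξ, (ρ ξ).toReal ∂μ ≤ Real.exp ((T:ℝ) * ε^2 / (v:ℝ)) := by
    rw [integral_eq_lintegral_of_nonneg_ae (ae_of_all _ fun ξ => ENNReal.toReal_nonneg)
      hρm.ennreal_toReal.aestronglyMeasurable]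
    have h1 : ∫⁻ ξ, ENNReal.ofReal ((ρ ξ).toReal) ∂μ ≤ ∫⁻ ξ, ρ ξ ∂μ :=
      lintegral_mono fun ξ => ENNReal.ofReal_toReal_le
    have h2 := h1.trans hlint
    calc (∫⁻ ξ, ENNReal.ofReal ((ρ ξ).toReal) ∂μ).toReal
        ≤ (ENNReal.ofReal (Real.exp ((T:ℝ) * ε^2 / (v:ℝ)))).toReal :=
          ENNReal.toReal_mono ENNReal.ofReal_ne_top h2
      _ = Real.exp ((T:ℝ) * ε^2 / (v:ℝ)) := ENNReal.toReal_ofReal (Real.exp_nonneg _)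
  unfold chiSq
  have := hint1 ▸ hint2
  linarith [hint1, hint2]
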